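/- (Limitation on KL lower bounds) Let B be any function mapping a distribution p on a finite set X, a multiset S of N ≥ 2 elements of X, and δ ∈ (0,1) to a real number, such that for all distributions p, q on X with full support, Pr_{S∼q^N}( KL(p‖q) ≥ B(p, S, δ) ) ≥ 1 − δ. Then for any such p and q, Pr_{S∼q^N}( B(p, S, δ) ≤ ln N ) ≥ 1 − 4δ. -/

import Mathlib

open MeasureTheory

-- (1 - 1/N)^N ≥ 1/4 for N ≥ 2
lemma aux_quarter_le (N : ℕ) (hN : 2 ≤ N) : (1/4 : ℝ) ≤ (1 - 1/(N:ℝ))^N := by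
  induction N, hN using Nat.le_induction with
  | base => norm_num
  | succ n hn IH =>
    have hx : (2:ℝ) ≤ n := by exact_mod_cast hn
    have hx0 : (0:ℝ) < n := by linarith
    have hx1 : (0:ℝ) < n + 1 := by linarith
    have hx2 : (0:ℝ) < (n:ℝ)^2 - 1 := by nlinarith
    -- Bernoulli : (1 + 1/(n²-1))^n ≥ 1 + n/(n²-1) ≥ 1 + 1/n
    have hbern : (1 : ℝ) + n * (1/((n:ℝ)^2 - 1)) ≤ (1 + 1/((n:ℝ)^2-1))^n := by
      apply one_add_mul_le_pow
      have : (0:ℝ) ≤ 1/((n:ℝ)^2-1) := by positivity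
      linarith
    have h1 : (1 : ℝ) + 1/(n:ℝ) ≤ (1 + 1/((n:ℝ)^2-1))^n := by
      refine le_trans ?_ hbern
      have : (1:ℝ)/(n:ℝ) ≤ n * (1/((n:ℝ)^2-1)) := by
        rw [div_le_iff₀ hx0, mul_comm, mul_one_div, ← mul_div_assoc, le_div_iff₀ hx2]
        nlinarith
      linarith
    have hfact : (1 - 1/((n:ℝ)+1)) = (1 - 1/(n:ℝ)) * (1 + 1/((n:ℝ)^2-1)) := by
      field_simp
      ring
    have hnn : (0:ℝ) ≤ 1 - 1/(n:ℝ) := by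
      rw [sub_nonneg, div_le_one hx0]; linarith
    have hpos : (0:ℝ) ≤ (1 - 1/(n:ℝ))^n := by positivity
    have key : (1 - 1/(n:ℝ))^n * (1 + 1/(n:ℝ)) ≤ (1 - 1/((n:ℝ)+1))^n := by
      rw [hfact, mul_pow]
      exact mul_le_mul_of_nonneg_left h1 hpos
    have hstep : (1/4 : ℝ) * (1 + 1/(n:ℝ)) ≤ (1 - 1/((n:ℝ)+1))^n := by
      refine le_trans ?_ key
      apply mul_le_mul_of_nonneg_right IH
      positivity
    have hlast : (0:ℝ) < 1 - 1/((n:ℝ)+1) := by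
      rw [sub_pos, div_lt_one hx1]; linarith
    have : (1 - 1/((n:ℝ)+1))^(n+1) = (1 - 1/((n:ℝ)+1))^n * (1 - 1/((n:ℝ)+1)) := by
      ring
    push_cast
    rw [this]
    have h2 : (1/4 : ℝ) * (1 + 1/(n:ℝ)) * (1 - 1/((n:ℝ)+1)) ≤
        (1 - 1/((n:ℝ)+1))^n * (1 - 1/((n:ℝ)+1)) :=
      mul_le_mul_of_nonneg_right hstep (le_of_lt hlast)
    refine le_trans ?_ h2
    have : (1 + 1/(n:ℝ)) * (1 - 1/((n:ℝ)+1)) = 1 := by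
      field_simp
      ring
    nlinarith [this]

-- product measure comparison on a discrete space
lemma aux_pi_le {X : Type*} [Fintype X] [MeasurableSpace X]
    [MeasurableSingletonClass X] (N : ℕ) (μ ν : Measure X)
    [IsProbabilityMeasure μ] [IsProbabilityMeasure ν]
    (c : ENNReal) (h : ∀ x, c * μ {x} ≤ ν {x}) (A : Set (Fin N → X)) :
    c ^ N * Measure.pi (fun _ : Fin N => μ) A ≤ Measure.pi (fun _ : Fin N => ν) A := by
  classical
  have hA : A.Finite := Set.toFinite A
  have decomp : ∀ (m : Measure (Fin N → X)), m A = ∑ s ∈ hA.toFinset, m {s} := by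
    intro m
    have : A = ⋃ s ∈ hA.toFinset, {s} := by
      ext s
      simp only [Set.mem_iUnion, Set.mem_singleton_iff, hA.mem_toFinset]
      exact ⟨fun h => ⟨s, h, rfl⟩, fun ⟨t, ht, he⟩ => he ▸ ht⟩
    conv_lhs => rw [this]
    rw [measure_biUnion_finset]
    · intro s _ t _ hst
      simp [Set.disjoint_singleton, hst]
    · intro s _
      exact measurableSet_singleton s
  have single : ∀ (m : Measure X), IsProbabilityMeasure m → ∀ (s : Fin N → X),
      Measure.pi (fun _ : Fin N => m) {s} = ∏ i : Fin N, m {s i} := by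
    intro m hm s
    rw [← Set.univ_pi_singleton s, Measure.pi_pi]
  rw [decomp, decomp, Finset.mul_sum]
  apply Finset.sum_le_sum
  intro s _
  rw [single μ inferInstance, single ν inferInstance]
  calc c ^ N * ∏ i : Fin N, μ {s i} = ∏ i : Fin N, (c * μ {s i}) := by
        rw [Finset.prod_mul_distrib, Finset.prod_const]
        simp
    _ ≤ ∏ i : Fin N, ν {s i} := Finset.prod_le_prod' fun i _ => h (s i)

theorem kl_lower_bound_limitation {X : Type*} [Fintype X] [MeasurableSpace X]
    [MeasurableSingletonClass X] (N : ℕ) (hN : 2 ≤ N) (δ : ℝ)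
    (hδ : 0 < δ ∧ δ < 1)
    (B : PMF X → Multiset X → ℝ → ℝ)
    (hB : ∀ p q : PMF X, (∀ x, p x ≠ 0) → (∀ x, q x ≠ 0) →
      (Measure.pi fun _ : Fin N => q.toMeasure)
          {s | B p (Multiset.ofList (List.ofFn s)) δ ≤
            ∑ x, (p x).toReal * Real.log ((p x).toReal / (q x).toReal)} ≥
        ENNReal.ofReal (1 - δ)) :
    ∀ p q : PMF X, (∀ x, p x ≠ 0) → (∀ x, q x ≠ 0) →
      (Measure.pi fun _ : Fin N => q.toMeasure)
          {s | B p (Multiset.ofList (List.ofFn s)) δ ≤ Real.log N} ≥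
        ENNReal.ofReal (1 - 4 * δ) := by
  intro p q hp hq
  classical
  have hN0 : (0:ℝ) < N := by
    have : (2:ℝ) ≤ N := by exact_mod_cast hN
    linarith
  have hN2 : (2:ℝ) ≤ N := by exact_mod_cast hN
  set r : ℝ := (N:ℝ)⁻¹ with hr
  have hr0 : 0 < r := by positivity
  have hr1 : r ≤ 1/2 := by
    rw [hr]
    rw [inv_le_comm₀ (by linarith) (by norm_num)]
    linarith
  set c : ENNReal := ENNReal.ofReal (1 - r) with hc
  set d : ENNReal := ENNReal.ofReal r with hd
  have hcd : c + d = 1 := by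
    rw [hc, hd, ← ENNReal.ofReal_add (by linarith) hr0.le]
    norm_num
  have hsum_q : ∑ x, q x = 1 := by rw [← tsum_fintype (L := SummationFilter.unconditional _)]; exact q.tsum_coe
  have hsum_p : ∑ x, p x = 1 := by rw [← tsum_fintype (L := SummationFilter.unconditional _)]; exact p.tsum_coe
  have hf : ∑ x, (c * q x + d * p x) = 1 := by
    rw [Finset.sum_add_distrib, ← Finset.mul_sum, ← Finset.mul_sum, hsum_q, hsum_p,
      mul_one, mul_one, hcd]
  set qt : PMF X := PMF.ofFintype (fun x => c * q x + d * p x) hf with hqt_def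
  have hqt_apply : ∀ x, qt x = c * q x + d * p x := fun x => rfl
  have hd0 : d ≠ 0 := by
    rw [hd, Ne, ENNReal.ofReal_eq_zero]
    push_neg
    exact hr0
  have hqt : ∀ x, qt x ≠ 0 := by
    intro x h0
    rw [hqt_apply, add_eq_zero] at h0
    exact hp x (by simpa [hd0] using h0.2)
  have hqt_ne_top : ∀ x, qt x ≠ ⊤ := fun x => PMF.apply_ne_top qt x
  -- KL divergence bound
  have hKL : (∑ x, (p x).toReal * Real.log ((p x).toReal / (qt x).toReal)) ≤ Real.log N := by
    have hsum1 : ∑ x, (p x).toReal = 1 := by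
      rw [← ENNReal.toReal_sum (fun a _ => PMF.apply_ne_top p a), hsum_p, ENNReal.toReal_one]
    calc ∑ x, (p x).toReal * Real.log ((p x).toReal / (qt x).toReal)
        ≤ ∑ x, (p x).toReal * Real.log N := by
          apply Finset.sum_le_sum
          intro x _
          have ha : 0 < (p x).toReal := ENNReal.toReal_pos (hp x) (PMF.apply_ne_top p x)
          have hb_ge : r * (p x).toReal ≤ (qt x).toReal := by
            have hle : d * p x ≤ qt x := by rw [hqt_apply]; exact le_add_self
            calc r * (p x).toReal = (d * p x).toReal := by
                  rw [ENNReal.toReal_mul, hd, ENNReal.toReal_ofReal hr0.le]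
              _ ≤ (qt x).toReal := ENNReal.toReal_mono (hqt_ne_top x) hle
          have hb : 0 < (qt x).toReal := lt_of_lt_of_le (by positivity) hb_ge
          have hNr : (N:ℝ) * r = 1 := by
            rw [hr]; field_simp
          have hdiv : (p x).toReal / (qt x).toReal ≤ N := by
            rw [div_le_iff₀ hb]
            have h2 : (N:ℝ) * (r * (p x).toReal) ≤ (N:ℝ) * (qt x).toReal :=
              mul_le_mul_of_nonneg_left hb_ge hN0.le
            nlinarith
          have hlog : Real.log ((p x).toReal / (qt x).toReal) ≤ Real.log N :=
            Real.log_le_log (by positivity) hdiv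
          exact mul_le_mul_of_nonneg_left hlog ha.le
      _ = Real.log N := by rw [← Finset.sum_mul, hsum1, one_mul]
  -- apply the hypothesis to p and qt
  have hBq := hB p qt hp hqt
  set A : Set (Fin N → X) := {s | B p (Multiset.ofList (List.ofFn s)) δ ≤ Real.log N} with hA_def
  have hmono : ENNReal.ofReal (1 - δ) ≤ Measure.pi (fun _ : Fin N => qt.toMeasure) A :=
    le_trans hBq (measure_mono (fun s hs => le_trans hs hKL))
  have hAmeas : MeasurableSet A := (Set.toFinite A).measurableSet
  have hcompl : Measure.pi (fun _ : Fin N => qt.toMeasure) Aᶜ ≤ ENNReal.ofReal δ := by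
    rw [measure_compl hAmeas (measure_ne_top _ _), measure_univ]
    calc (1:ENNReal) - Measure.pi (fun _ : Fin N => qt.toMeasure) A
        ≤ 1 - ENNReal.ofReal (1 - δ) := tsub_le_tsub_left hmono 1
      _ = ENNReal.ofReal δ := by
          rw [← ENNReal.ofReal_one, ← ENNReal.ofReal_sub _ (by linarith)]
          norm_num
  -- compare the product measures
  have hsing : ∀ x, c * q.toMeasure {x} ≤ qt.toMeasure {x} := by
    intro x
    rw [PMF.toMeasure_apply_singleton _ _ (measurableSet_singleton x),
      PMF.toMeasure_apply_singleton _ _ (measurableSet_singleton x), hqt_apply]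
    exact le_add_right le_rfl
  have hcomp := aux_pi_le N q.toMeasure qt.toMeasure c hsing Aᶜ
  have hcN : ENNReal.ofReal (1/4 : ℝ) ≤ c ^ N := by
    rw [hc, ← ENNReal.ofReal_pow (by linarith) N]
    apply ENNReal.ofReal_le_ofReal
    rw [hr, ← one_div]
    exact aux_quarter_le N hN
  have hqA : Measure.pi (fun _ : Fin N => q.toMeasure) Aᶜ ≤ ENNReal.ofReal (4 * δ) := by
    have h14 : ENNReal.ofReal (1/4:ℝ) * Measure.pi (fun _ : Fin N => q.toMeasure) Aᶜ ≤
        ENNReal.ofReal (1/4:ℝ) * ENNReal.ofReal (4 * δ) := by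
      calc ENNReal.ofReal (1/4:ℝ) * Measure.pi (fun _ : Fin N => q.toMeasure) Aᶜ
          ≤ c ^ N * Measure.pi (fun _ : Fin N => q.toMeasure) Aᶜ := mul_le_mul_left hcN _
        _ ≤ Measure.pi (fun _ : Fin N => qt.toMeasure) Aᶜ := hcomp
        _ ≤ ENNReal.ofReal δ := hcompl
        _ = ENNReal.ofReal (1/4:ℝ) * ENNReal.ofReal (4 * δ) := by
            rw [← ENNReal.ofReal_mul (by norm_num)]
            congr 1
            ring
    exact (ENNReal.mul_le_mul_iff_right (by simp) (by simp)).mp h14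
  -- conclude
  by_cases h4 : 1 - 4 * δ ≤ 0
  · rw [ge_iff_le, ENNReal.ofReal_of_nonpos h4]
    exact zero_le
  · push_neg at h4
    have hadd : Measure.pi (fun _ : Fin N => q.toMeasure) A +
        Measure.pi (fun _ : Fin N => q.toMeasure) Aᶜ = 1 := by
      rw [measure_add_measure_compl hAmeas, measure_univ]
    have hone : ENNReal.ofReal (1 - 4 * δ) + ENNReal.ofReal (4 * δ) = 1 := by
      rw [← ENNReal.ofReal_add (by linarith) (by linarith)]
      norm_num
    rw [ge_iff_le]
    refine (ENNReal.add_le_add_iff_right (a := ENNReal.ofReal (4 * δ))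
      ENNReal.ofReal_ne_top).mp ?_
    calc ENNReal.ofReal (1 - 4 * δ) + ENNReal.ofReal (4 * δ) = 1 := hone
      _ = Measure.pi (fun _ : Fin N => q.toMeasure) A +
          Measure.pi (fun _ : Fin N => q.toMeasure) Aᶜ := hadd.symm
      _ ≤ Measure.pi (fun _ : Fin N => q.toMeasure) A + ENNReal.ofReal (4 * δ) :=
          add_le_add_right hqA _
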